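/- arXiv:2212.03959 — 2 statements merged into one kernel-verified Lean document; each statement's English description precedes it below -/
import Mathlib

section
/- Let T be a finite tree satisfying the path condition. Then for every positive integer d, the set of vertices of T whose degree is at least d induces a connected subgraph (i.e., a subtree) of T. -/
open SimpleGraph

/-- Degree of a vertex. -/
noncomputable def deg {V : Type*} (G : SimpleGraph V) (v : V) : ℕ :=
  Nat.card (G.neighborSet v)

/-- Sombor index. -/
noncomputable def somborIndex {V : Type*} (G : SimpleGraph V) : ℝ :=
  ∑ᶠ e ∈ G.edgeSet,
    Sym2.lift ⟨fun u v => Real.sqrt ((deg G u : ℝ) ^ 2 + (deg G v : ℝ) ^ 2),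
      fun u v => by simp [add_comm]⟩ e

/-- Multiset of degrees of non-pendant vertices. -/
noncomputable def degSeq {V : Type*} [Fintype V] (G : SimpleGraph V) : Multiset ℕ :=
  ((Finset.univ : Finset V).filter (fun v => deg G v ≠ 1)).val.map (deg G)

def pathCondition {V : Type*} (G : SimpleGraph V) : Prop :=
  ∀ ⦃u v : V⦄ (p : G.Walk u v), p.IsPath → 3 ≤ p.length →
    deg G u < deg G v → deg G (p.getVert 1) ≤ deg G (p.getVert (p.length - 1))

def attachPendants {V : Type*} (G : SimpleGraph V) (v : V) (k : ℕ) :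
    SimpleGraph (V ⊕ Fin k) where
  Adj x y :=
    match x, y with
    | Sum.inl a, Sum.inl b => G.Adj a b
    | Sum.inl a, Sum.inr _ => a = v
    | Sum.inr _, Sum.inl b => b = v
    | Sum.inr _, Sum.inr _ => False
  symm := by
    constructor
    rintro (a | i) (b | j) h
    · exact h.symm
    · exact h
    · exact h
    · exact h.elim
  loopless := by
    constructor
    rintro (a | i) h
    · exact G.loopless.irrefl a h
    · exact h

/-- If `y` is adjacent to the start `a` of a path `p` and differs from the second
vertex, then (in an acyclic graph) `y` is not on `p`. -/
lemma not_mem_support_of_acyclic {V : Type*} {T : SimpleGraph V} (hac : T.IsAcyclic)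
    {a u y : V} (p : T.Walk a u) (hp : p.IsPath) (hadj : T.Adj a y)
    (hne : y ≠ p.getVert 1) : y ∉ p.support := by
  classical
  intro hy
  have hq : (p.takeUntil y hy).IsPath := hp.takeUntil hy
  have huniq := isAcyclic_iff_path_unique.mp hac ⟨p.takeUntil y hy, hq⟩ (Path.singleton hadj)
  have hqe : p.takeUntil y hy = Walk.cons hadj Walk.nil := congrArg Subtype.val huniq
  have hps : (p.takeUntil y hy).append (p.dropUntil y hy) = p := p.take_spec hy
  rw [hqe] at hps
  apply hne
  rw [← hps]
  simp [Walk.getVert_cons_succ]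

/-- Infinite-descent lemma: in a finite tree with the path condition there is no path
`w ⋯ u` of length at least `2` whose endpoints have degree at least `d ≥ 2` but whose
second-to-last vertex has degree less than `d`. -/
lemma descent {V : Type*} [Fintype V] (T : SimpleGraph V) (hT : T.IsTree)
    (hpc : pathCondition T) (d : ℕ) (hd : 2 ≤ d) {w u : V}
    (hu : d ≤ deg T u) (hw : d ≤ deg T w)
    (p0 : T.Walk w u) (hp0 : p0.IsPath) (hlen : 2 ≤ p0.length)
    (hlow : deg T (p0.getVert (p0.length - 1)) < d) : False := by
  have key : ∀ n : ℕ, ∃ (a : V) (p : T.Walk a u), p.IsPath ∧ 2 ≤ p.length ∧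
      n ≤ p.length ∧ d ≤ deg T a ∧ deg T (p.getVert (p.length - 1)) < d := by
    intro n
    induction n with
    | zero => exact ⟨w, p0, hp0, hlen, Nat.zero_le _, hw, hlow⟩
    | succ n ih =>
      obtain ⟨a, p, hp, h2, hn, ha, hl⟩ := ih
      have hnt : Nontrivial (T.neighborSet a) :=
        Finite.one_lt_card_iff_nontrivial.mp (by unfold deg at ha; omega)
      obtain ⟨⟨y₁, hy₁⟩, ⟨y₂, hy₂⟩, hyy⟩ := hnt
      have hyy' : y₁ ≠ y₂ := fun h => hyy (by simpa using h)
      obtain ⟨y, hy, hyne⟩ : ∃ y, y ∈ T.neighborSet a ∧ y ≠ p.getVert 1 := by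
        by_cases h1 : y₁ = p.getVert 1
        · exact ⟨y₂, hy₂, fun h => hyy' (h1.trans h.symm)⟩
        · exact ⟨y₁, hy₁, h1⟩
      have hadj : T.Adj a y := hy
      have hns : y ∉ p.support := not_mem_support_of_acyclic hT.2 p hp hadj hyne
      have hp' : (Walk.cons hadj.symm p).IsPath := hp.cons hns
      have hlen' : (Walk.cons hadj.symm p).length = p.length + 1 := Walk.length_cons _ _
      have hsl : (Walk.cons hadj.symm p).getVert ((Walk.cons hadj.symm p).length - 1)
          = p.getVert (p.length - 1) := by
        obtain ⟨m, hm⟩ : ∃ m, p.length = m + 1 := ⟨p.length - 1, by omega⟩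
        rw [hlen', hm]
        simp [Walk.getVert_cons_succ]
      by_cases hyd : d ≤ deg T y
      · exact ⟨y, Walk.cons hadj.symm p, hp', by omega, by omega, hyd, by rw [hsl]; exact hl⟩
      · exfalso
        have := hpc (Walk.cons hadj.symm p) hp' (by omega)
          (lt_of_lt_of_le (by omega) hu)
        rw [hsl] at this
        simp only [Walk.getVert_cons_succ, Walk.getVert_zero] at this
        omega
  obtain ⟨a, p, hp, _, hn, _, _⟩ := key (Fintype.card V)
  have := hp.length_lt
  omega

/-- In a tree satisfying the path condition, for every positive integer `d`, the vertices of
degree at least `d` induce a connected subgraph (a subtree). -/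
theorem highDegree_induce_connected {V : Type*} [Fintype V] (T : SimpleGraph V) (hT : T.IsTree)
    (hpc : pathCondition T) (d : ℕ) (hd : 1 ≤ d) :
    (T.induce {v : V | d ≤ deg T v}).Preconnected := by
  classical
  have aux : ∀ n (u w : V) (hu : d ≤ deg T u) (hw : d ≤ deg T w)
      (p : T.Walk u w), p.IsPath → p.length = n →
      (T.induce {v : V | d ≤ deg T v}).Reachable ⟨u, hu⟩ ⟨w, hw⟩ := by
    intro n
    induction n with
    | zero =>
      intro u w hu hw p hp hl
      have huw : u = w := Walk.eq_of_length_eq_zero hl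
      subst huw
      rfl
    | succ n ih =>
      intro u w hu hw p hp hl
      cases p with
      | nil => simp at hl
      | @cons _ b _ hadj q =>
        have hq : q.IsPath := hp.of_cons
        have hql : q.length = n := by simpa using hl
        by_cases hb : d ≤ deg T b
        · have hreach := ih b w hb hw q hq hql
          refine Reachable.trans ?_ hreach
          exact Adj.reachable (by simpa [SimpleGraph.comap] using hadj)
        · exfalso
          push_neg at hb
          have hb1 : 1 ≤ deg T b := by
            have : Nonempty (T.neighborSet b) := ⟨⟨u, hadj.symm⟩⟩
            have : 0 < Nat.card (T.neighborSet b) := Nat.card_pos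
            unfold deg; omega
          have hd2 : 2 ≤ d := by omega
          -- b ≠ w since deg b < d ≤ deg w
          have hq1 : 1 ≤ q.length := by
            rcases Nat.eq_zero_or_pos q.length with h0 | h0
            · exact absurd (Walk.eq_of_length_eq_zero h0 ▸ hw) (by omega)
            · omega
          set p' := (Walk.cons hadj q).reverse with hp'def
          have hp' : p'.IsPath := hp.reverse
          have hp'len : p'.length = q.length + 1 := by
            simp [hp'def]
          have hsl : p'.getVert (p'.length - 1) = b := by
            rw [Walk.getVert_reverse]
            have h1 : (Walk.cons hadj q).length = q.length + 1 := Walk.length_cons _ _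
            have h2 : (Walk.cons hadj q).length - ((Walk.cons hadj q).reverse.length - 1) = 1 := by
              rw [Walk.length_reverse]; omega
            rw [h2]
            simp [Walk.getVert_cons_succ]
          exact descent T hT hpc d hd2 hu hw p' hp' (by omega) (by rw [hsl]; omega)
  intro x y
  obtain ⟨u, hu⟩ := x
  obtain ⟨w, hw⟩ := y
  obtain ⟨p⟩ := hT.isConnected.preconnected u w
  exact aux (p.toPath : T.Walk u w).length u w hu hw _ (p.toPath).2 rfl
end

section
/- Let D = (d₁, …, d_k) with d₁ ≥ … ≥ d_k ≥ 2 be a degree sequence realizable by a tree. Then there exists a tree T with degree sequence D that minimizes the Sombor index among all trees with degree sequence D and that contains a non-pendant vertex v of degree d_k (the minimum degree among non-pendant vertices) such that all neighbors of v, except at most one, are pendant. -/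
open SimpleGraph

-- basic deg lemmas
lemma deg_eq_ncard {V : Type*} (G : SimpleGraph V) (v : V) :
    deg G v = (G.neighborSet v).ncard := Nat.card_coe_set_eq _

lemma deg_eq_degree {V : Type*} [Fintype V] (G : SimpleGraph V) [DecidableRel G.Adj] (v : V) :
    deg G v = G.degree v := by
  rw [deg_eq_ncard, SimpleGraph.degree, SimpleGraph.neighborFinset,
    Set.ncard_eq_toFinset_card']

lemma neighborSet_eq_singleton {V : Type*} [Finite V] {G : SimpleGraph V} {u s : V}
    (h : G.Adj u s) (h1 : deg G s = 1) : G.neighborSet s = {u} := by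
  rw [deg_eq_ncard] at h1
  obtain ⟨a, ha⟩ := Set.ncard_eq_one.mp h1
  have : u ∈ G.neighborSet s := h.symm
  rw [ha] at this ⊢
  simp_all

lemma deg_pos_of_adj {V : Type*} [Finite V] {G : SimpleGraph V} {u s : V}
    (h : G.Adj u s) : 1 ≤ deg G s := by
  rw [deg_eq_ncard]
  have : u ∈ G.neighborSet s := h.symm
  have hfin : (G.neighborSet s).Finite := Set.toFinite _
  have := Set.ncard_pos hfin |>.mpr ⟨u, this⟩
  omega

-- key real inequality
lemma real_key {A B t : ℝ} (hB : 0 ≤ B) (hBA : B ≤ A) (ht : 1 ≤ t) :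
    Real.sqrt (B + 1) + Real.sqrt (A + t) ≤ Real.sqrt (A + 1) + Real.sqrt (B + t) := by
  have hA : 0 ≤ A := le_trans hB hBA
  set α := Real.sqrt (A + t) with hα
  set β := Real.sqrt (B + t) with hβ
  set γ := Real.sqrt (A + 1) with hγ
  set δ := Real.sqrt (B + 1) with hδ
  have hα2 : α ^ 2 = A + t := Real.sq_sqrt (by linarith)
  have hβ2 : β ^ 2 = B + t := Real.sq_sqrt (by linarith)
  have hγ2 : γ ^ 2 = A + 1 := Real.sq_sqrt (by linarith)
  have hδ2 : δ ^ 2 = B + 1 := Real.sq_sqrt (by linarith)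
  have hαβ : β ≤ α := Real.sqrt_le_sqrt (by linarith)
  have hδγ : δ ≤ γ := Real.sqrt_le_sqrt (by linarith)
  have hγα : γ ≤ α := Real.sqrt_le_sqrt (by linarith)
  have hδβ : δ ≤ β := Real.sqrt_le_sqrt (by linarith)
  have hγpos : 0 < γ := Real.sqrt_pos.mpr (by linarith)
  have hδpos : 0 < δ := Real.sqrt_pos.mpr (by linarith)
  -- (α-β)(α+β) = (γ-δ)(γ+δ), α+β ≥ γ+δ > 0, γ-δ ≥ 0
  nlinarith [mul_le_mul_of_nonneg_left (add_le_add hγα hδβ) (sub_nonneg.mpr hδγ)]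

-- connectivity transfer
lemma conn_of_adj_reachable {G G' : SimpleGraph V} (hG : G.Connected)
    (h : ∀ a b, G.Adj a b → G'.Reachable a b) : G'.Connected := by
  have hpre : G'.Preconnected := by
    intro x y
    obtain ⟨p⟩ := hG.preconnected x y
    induction p with
    | nil => exact SimpleGraph.Reachable.refl _
    | cons hadj q ih => exact (h _ _ hadj).trans ih
  haveI := hG.nonempty
  exact ⟨hpre⟩

-- pendant vertices are not on paths except as endpoints
lemma pendant_not_mem_support {G : SimpleGraph V} {c z : V}
    (hc : G.neighborSet c ⊆ {z}) {a b : V} (p : G.Walk a b) (hp : p.IsPath)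
    (ha : c ≠ a) (hb : c ≠ b) : c ∉ p.support := by
  induction p with
  | nil => simp [ha]
  | @cons a a' b hadj q ih =>
    rw [SimpleGraph.Walk.cons_isPath_iff] at hp
    rw [SimpleGraph.Walk.support_cons]
    intro hmem
    rcases List.mem_cons.mp hmem with h1 | h2
    · exact ha h1
    by_cases hca : c = a'
    · subst hca
      have haz : a = z := hc (by exact hadj.symm)
      have hq : ¬ q.Nil := SimpleGraph.Walk.not_nil_of_ne hb
      obtain ⟨x, hx, q', rfl⟩ := SimpleGraph.Walk.not_nil_iff.mp hq
      have hxz : x = z := hc hx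
      have : a ∈ (SimpleGraph.Walk.cons hx q').support := by
        rw [haz, ← hxz]; simp
      exact hp.2 this
    · exact (ih hp.1 hca hb) h2

-- endpoint not in takeUntil
lemma end_not_mem_takeUntil [DecidableEq V] {G : SimpleGraph V} {a b x : V}
    (p : G.Walk a b) (hp : p.IsPath) (hx : x ∈ p.support) (hxb : x ≠ b) :
    b ∉ (p.takeUntil x hx).support := by
  have hnd : p.support.Nodup := hp.support_nodup
  rw [← p.take_spec hx, SimpleGraph.Walk.support_append, List.nodup_append'] at hnd
  intro hb
  refine hnd.2.2 hb ?_
  have : b ∈ (p.dropUntil x hx).support := SimpleGraph.Walk.end_mem_support _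
  rw [SimpleGraph.Walk.support_eq_cons] at this
  rcases List.mem_cons.mp this with h | h
  · exact absurd h.symm hxb
  · simpa using h

-- last edge decomposition of a nontrivial path
lemma lastEdge {G : SimpleGraph V} {a b : V} (p : G.Walk a b) (hp : p.IsPath) (hab : a ≠ b) :
    ∃ (y : V) (Q : G.Walk a y) (h : G.Adj y b), p = Q.concat h ∧ Q.IsPath ∧ b ∉ Q.support ∧
      s(y, b) ∈ p.edges ∧ (∀ x, x ≠ b → s(x, b) ∈ p.edges → x = y) := by
  have hnil : ¬ p.reverse.Nil := SimpleGraph.Walk.not_nil_of_ne (Ne.symm hab)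
  obtain ⟨y, hadj, q, hq⟩ := SimpleGraph.Walk.not_nil_iff.mp hnil
  have hpeq : p = q.reverse.concat hadj.symm := by
    have := congrArg SimpleGraph.Walk.reverse hq
    rw [SimpleGraph.Walk.reverse_reverse] at this
    rw [this, SimpleGraph.Walk.reverse_cons, SimpleGraph.Walk.concat_eq_append]
  refine ⟨y, q.reverse, hadj.symm, hpeq, ?_, ?_, ?_, ?_⟩
  case _ =>
    -- Q is a path
    rw [SimpleGraph.Walk.isPath_def]
    have := hp.support_nodup
    rw [hpeq, SimpleGraph.Walk.support_concat, List.nodup_append'] at this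
    exact this.1
  case _ =>
    have := hp.support_nodup
    rw [hpeq, SimpleGraph.Walk.support_concat, List.nodup_append'] at this
    intro hb
    exact this.2.2 hb (by simp)
  case _ =>
    rw [hpeq, SimpleGraph.Walk.edges_concat]
    simp
  case _ =>
    intro x hxb hxe
    rw [hpeq, SimpleGraph.Walk.edges_concat, List.concat_eq_append, List.mem_append] at hxe
    rcases hxe with h | h
    · exfalso
      have : b ∈ q.reverse.support := SimpleGraph.Walk.snd_mem_support_of_mem_edges _ h
      have hnd := hp.support_nodup
      rw [hpeq, SimpleGraph.Walk.support_concat,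
        List.nodup_append'] at hnd
      exact hnd.2.2 this (by simp)
    · simp only [List.mem_singleton, Sym2.eq, Sym2.rel_iff', Prod.mk.injEq, Prod.swap_prod_mk] at h
      rcases h with ⟨h1, _⟩ | ⟨h1, h2⟩
      · exact h1
      · exact absurd h1 hxb

-- size determined by degree sequence
lemma size_eq {m : ℕ} (T : SimpleGraph (Fin m)) (hT : T.IsTree) {D : List ℕ}
    (hdeg : degSeq T = ↑D) : m + D.length = D.sum + 2 := by
  classical
  have hedge : T.edgeFinset.card + 1 = Fintype.card (Fin m) := hT.card_edgeFinset
  have hhs : ∑ v : Fin m, T.degree v = 2 * T.edgeFinset.card :=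
    SimpleGraph.sum_degrees_eq_twice_card_edges T
  have hdd : ∀ v : Fin m, deg T v = T.degree v := fun v => deg_eq_degree T v
  set f := fun v : Fin m => deg T v with hf
  have hsplit : ∑ v ∈ Finset.univ.filter (fun v => ¬ (deg T v ≠ 1)), f v
      + ∑ v ∈ Finset.univ.filter (fun v => deg T v ≠ 1), f v = ∑ v : Fin m, f v := by
    rw [add_comm]
    exact Finset.sum_filter_add_sum_filter_not _ _ _
  have hsum1 : ∑ v ∈ Finset.univ.filter (fun v => ¬ (deg T v ≠ 1)), f v
      = (Finset.univ.filter (fun v => ¬ (deg T v ≠ 1))).card := by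
    rw [Finset.card_eq_sum_ones]
    refine Finset.sum_congr rfl fun v hv => ?_
    simp only [Finset.mem_filter, not_not] at hv
    simp [hf, hv.2]
  have hsum2 : ∑ v ∈ Finset.univ.filter (fun v => deg T v ≠ 1), f v = D.sum := by
    have : (degSeq T).sum = (↑D : Multiset ℕ).sum := by rw [hdeg]
    simpa [degSeq, Finset.sum] using this
  have hcard2 : (Finset.univ.filter (fun v => deg T v ≠ 1)).card = D.length := by
    have : Multiset.card (degSeq T) = Multiset.card (↑D : Multiset ℕ) := by rw [hdeg]
    rw [degSeq, Multiset.card_map, Multiset.coe_card] at this; exact this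
  have hcards : (Finset.univ.filter (fun v => ¬ (deg T v ≠ 1))).card
      + (Finset.univ.filter (fun v => deg T v ≠ 1)).card = m := by
    rw [add_comm]
    simpa using Finset.card_filter_add_card_filter_not
      (s := (Finset.univ : Finset (Fin m))) (p := fun v => deg T v ≠ 1)
  have htot : ∑ v : Fin m, f v = 2 * T.edgeFinset.card := by
    rw [hf]; simpa [hdd] using hhs
  simp only [Fintype.card_fin] at hedge
  omega

-- existence of a peripheral non-pendant vertex
lemma exists_peripheral {n : ℕ} {T : SimpleGraph (Fin n)} (hT : T.IsTree)
    {r₀ : Fin n} (hr₀ : deg T r₀ ≠ 1) :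
    ∃ u : Fin n, deg T u ≠ 1 ∧
      (∀ x₁ x₂, T.Adj u x₁ → T.Adj u x₂ → deg T x₁ ≠ 1 → deg T x₂ ≠ 1 → x₁ = x₂) := by
  classical
  -- the unique path from r₀ to x
  have hup := hT.existsUnique_path
  let P : ∀ x : Fin n, T.Walk r₀ x := fun x => (hup r₀ x).choose
  have hP : ∀ x, (P x).IsPath := fun x => (hup r₀ x).choose_spec.1
  have hPu : ∀ x (q : T.Walk r₀ x), q.IsPath → q = P x :=
    fun x q hq => (hup r₀ x).choose_spec.2 q hq
  obtain ⟨u, hu_mem, hu_max⟩ := Finset.exists_max_image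
    (Finset.univ.filter (fun v => deg T v ≠ 1)) (fun x => (P x).length)
    ⟨r₀, by simp [hr₀]⟩
  simp only [Finset.mem_filter] at hu_mem
  refine ⟨u, hu_mem.2, ?_⟩
  have key : ∀ x, T.Adj u x → deg T x ≠ 1 → ∀ y (Q : T.Walk r₀ y) (h : T.Adj y u),
      P u = Q.concat h → u ∉ Q.support →
      (∀ z, z ≠ u → s(z, u) ∈ (P u).edges → z = y) → x = y := by
    intro x hadj hx y Q h hdecomp hQu hlast
    by_cases hxy : x = y
    · exact hxy
    exfalso
    by_cases hxs : x ∈ (P u).support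
    · -- takeUntil x, then concat to u : another path, so its last edge s(x,u) ∈ edges
      have hxu : x ≠ u := fun hh => T.loopless.irrefl u (hh ▸ hadj)
      have hQ1 : ((P u).takeUntil x hxs).IsPath := (hP u).takeUntil hxs
      have hu_not : u ∉ ((P u).takeUntil x hxs).support :=
        end_not_mem_takeUntil (P u) (hP u) hxs hxu
      have hP2 : (((P u).takeUntil x hxs).concat hadj.symm).IsPath := by
        rw [SimpleGraph.Walk.isPath_def, SimpleGraph.Walk.support_concat,
          List.nodup_append']
        exact ⟨hQ1.support_nodup, List.nodup_singleton _,
          by intro z hz hz'; simp at hz'; subst hz'; exact hu_not hz⟩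
      have := hPu u _ hP2
      have hmem : s(x, u) ∈ (P u).edges := by
        rw [← this, SimpleGraph.Walk.edges_concat]
        simp
      exact hxy (hlast x hxu hmem)
    · -- extend P u by edge u-x : unique path to x, longer, contradicting maximality
      have hP3 : ((P u).concat hadj).IsPath := by
        rw [SimpleGraph.Walk.isPath_def, SimpleGraph.Walk.support_concat,
          List.nodup_append']
        exact ⟨(hP u).support_nodup, List.nodup_singleton _,
          by intro z hz hz'; simp at hz'; subst hz'; exact hxs hz⟩
      have hPx := hPu x _ hP3
      have hlen : (P x).length = (P u).length + 1 := by
        rw [← hPx, SimpleGraph.Walk.length_concat]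
      have := hu_max x (by simp [hx])
      omega
  intro x₁ x₂ h1 h2 hx1 hx2
  by_cases hur : u = r₀
  · -- u = r₀ : all non-pendant vertices have path length ≤ 0, i.e. equal r₀
    exfalso
    subst hur
    have h0 : (P u).length = 0 := by
      have : (SimpleGraph.Walk.nil : T.Walk u u) = P u := hPu u _ SimpleGraph.Walk.IsPath.nil
      rw [← this]; rfl
    have hx1' := hu_max x₁ (by simp [hx1])
    rw [h0] at hx1'
    have : (P x₁).length = 0 := Nat.le_zero.mp hx1'
    have := SimpleGraph.Walk.eq_of_length_eq_zero (p := P x₁) this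
    exact T.loopless.irrefl u (this ▸ h1)
  · obtain ⟨y, Q, h, hdecomp, _, hQu, _, hlast⟩ := lastEdge (P u) (hP u) (Ne.symm hur)
    have e1 := key x₁ h1 hx1 y Q h hdecomp hQu (fun z hz hm => hlast z hz hm)
    have e2 := key x₂ h2 hx2 y Q h hdecomp hQu (fun z hz hm => hlast z hz hm)
    rw [e1, e2]

-- the double move: exchange a pendant neighbor of u with a subtree neighbor of w
set_option maxHeartbeats 1600000 in
lemma double_move {n : ℕ} {T : SimpleGraph (Fin n)} (hT : T.IsTree)
    {u w s r : Fin n} (huw : u ≠ w)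
    (hNs : T.neighborSet s = {u})
    (hwr : T.Adj w r)
    (hur : ¬ T.Adj u r)
    (p₀ : T.Walk u w) (hp₀ : p₀.IsPath)
    (hsp : s ∉ p₀.support) (hrp : r ∉ p₀.support)
    (hdeg : deg T w ≤ deg T u) :
    ∃ T' : SimpleGraph (Fin n), T'.IsTree ∧
      (∀ x, deg T' x = deg T x) ∧
      somborIndex T' ≤ somborIndex T ∧
      T'.neighborSet u = insert r (T.neighborSet u \ {s}) ∧
      T'.neighborSet w = insert s (T.neighborSet w \ {r}) ∧
      T'.neighborSet s = {w} ∧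
      (∀ x, x ≠ u → x ≠ w → x ≠ s → x ≠ r → T'.neighborSet x = T.neighborSet x) ∧
      (∃ p₁ : T'.Walk u w, p₁.IsPath ∧ p₁.support = p₀.support) := by
  classical
  have hsu_adj : T.Adj s u := by
    have : u ∈ T.neighborSet s := by rw [hNs]; rfl
    exact this
  have hus_adj : T.Adj u s := hsu_adj.symm
  have hsu : s ≠ u := fun h => T.loopless.irrefl u (h ▸ hsu_adj)
  have hsw : s ≠ w := fun h => hsp (h ▸ p₀.end_mem_support)
  have hrw : r ≠ w := fun h => T.loopless.irrefl w (h ▸ hwr)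
  have hru : r ≠ u := fun h => hrp (h ▸ p₀.start_mem_support)
  have hsr : s ≠ r := by
    intro h
    have h2 : T.Adj s w := by rw [h]; exact hwr.symm
    have : w ∈ T.neighborSet s := h2
    rw [hNs] at this
    exact huw this.symm
  have hws_adj : ¬ T.Adj w s := by
    intro h
    have : w ∈ T.neighborSet s := h.symm
    rw [hNs] at this
    exact huw this.symm
  have hsu' : u ≠ s := hsu.symm
  have hsw2 : w ≠ s := hsw.symm
  have hrw2 : w ≠ r := hrw.symm
  have hru2 : u ≠ r := hru.symm
  have hsr2 : r ≠ s := hsr.symm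
  have hwu : w ≠ u := huw.symm
  -- the new graph, kept opaque via its adjacency characterisation
  obtain ⟨T', hT'adj⟩ : ∃ T' : SimpleGraph (Fin n), ∀ x y,
      T'.Adj x y ↔ ((T.Adj x y ∧ s(x,y) ≠ s(u,s) ∧ s(x,y) ≠ s(w,r)) ∨
        s(x,y) = s(w,s) ∨ s(x,y) = s(u,r)) := by
    refine ⟨⟨fun x y => (T.Adj x y ∧ s(x,y) ≠ s(u,s) ∧ s(x,y) ≠ s(w,r)) ∨
        s(x,y) = s(w,s) ∨ s(x,y) = s(u,r), ?_, ?_⟩, fun _ _ => Iff.rfl⟩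
    · constructor
      intro x y h
      rw [Sym2.eq_swap (a := y) (b := x), T.adj_comm y x]
      exact h
    · constructor
      intro x h
      rcases h with ⟨h, _, _⟩ | h | h
      · exact T.loopless.irrefl x h
      · rw [Sym2.eq_iff] at h
        rcases h with ⟨h1, h2⟩ | ⟨h1, h2⟩ <;> exact hsw2 (by grind)
      · rw [Sym2.eq_iff] at h
        rcases h with ⟨h1, h2⟩ | ⟨h1, h2⟩ <;> exact hru2 (by grind)
  have hNu : T'.neighborSet u = insert r (T.neighborSet u \ {s}) := by
    ext x
    rw [SimpleGraph.mem_neighborSet, hT'adj]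
    constructor
    · intro hx
      rcases hx with ⟨ha, h1, _⟩ | h | h
      · refine Or.inr ⟨ha, fun hxs => h1 ?_⟩
        rw [Set.mem_singleton_iff] at hxs
        rw [hxs]
      · exfalso
        rcases Sym2.eq_iff.mp h with ⟨h1, _⟩ | ⟨h1, _⟩
        · exact huw h1
        · exact hsu' h1
      · rcases Sym2.eq_iff.mp h with ⟨_, h2⟩ | ⟨h1, _⟩
        · exact Or.inl h2
        · exact absurd h1 hru2
    · intro hx
      rcases hx with rfl | ⟨ha, hxs⟩
      · exact Or.inr (Or.inr rfl)
      · refine Or.inl ⟨ha, fun h => ?_, fun h => ?_⟩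
        · rcases Sym2.eq_iff.mp h with ⟨_, h2⟩ | ⟨h1, _⟩
          · exact hxs (by rw [h2]; rfl)
          · exact hsu' h1
        · rcases Sym2.eq_iff.mp h with ⟨h1, _⟩ | ⟨h1, _⟩
          · exact huw h1
          · exact hru2 h1
  have hNw : T'.neighborSet w = insert s (T.neighborSet w \ {r}) := by
    ext x
    rw [SimpleGraph.mem_neighborSet, hT'adj]
    constructor
    · intro hx
      rcases hx with ⟨ha, _, h2⟩ | h | h
      · refine Or.inr ⟨ha, fun hxr => h2 ?_⟩
        rw [Set.mem_singleton_iff] at hxr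
        rw [hxr]
      · rcases Sym2.eq_iff.mp h with ⟨_, h2⟩ | ⟨h1, _⟩
        · exact Or.inl h2
        · exact absurd h1 hsw2
      · exfalso
        rcases Sym2.eq_iff.mp h with ⟨h1, _⟩ | ⟨h1, _⟩
        · exact hwu h1
        · exact hrw2 h1
    · intro hx
      rcases hx with rfl | ⟨ha, hxr⟩
      · exact Or.inr (Or.inl rfl)
      · refine Or.inl ⟨ha, fun h => ?_, fun h => ?_⟩
        · rcases Sym2.eq_iff.mp h with ⟨h1, _⟩ | ⟨h1, _⟩
          · exact hwu h1
          · exact hsw h1.symm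
        · rcases Sym2.eq_iff.mp h with ⟨_, h2⟩ | ⟨h1, _⟩
          · exact hxr (by rw [h2]; rfl)
          · exact hrw h1.symm
  have hNs2 : T'.neighborSet s = {w} := by
    ext x
    rw [SimpleGraph.mem_neighborSet, hT'adj]
    constructor
    · intro hx
      rcases hx with ⟨ha, h1, _⟩ | h | h
      · exfalso
        have hmem : x ∈ T.neighborSet s := ha
        rw [hNs, Set.mem_singleton_iff] at hmem
        exact h1 (by rw [hmem, Sym2.eq_swap])
      · rcases Sym2.eq_iff.mp h with ⟨h1, _⟩ | ⟨_, h2⟩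
        · exact absurd h1 hsw
        · exact h2
      · exfalso
        rcases Sym2.eq_iff.mp h with ⟨h1, _⟩ | ⟨h1, _⟩
        · exact hsu h1
        · exact hsr h1
    · intro hx
      rw [Set.mem_singleton_iff] at hx
      subst hx
      exact Or.inr (Or.inl (Sym2.eq_swap))
  have hNr : T'.neighborSet r = insert u (T.neighborSet r \ {w}) := by
    ext x
    rw [SimpleGraph.mem_neighborSet, hT'adj]
    constructor
    · intro hx
      rcases hx with ⟨ha, _, h2⟩ | h | h
      · refine Or.inr ⟨ha, fun hxw => h2 ?_⟩
        rw [Set.mem_singleton_iff] at hxw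
        rw [hxw, Sym2.eq_swap]
      · exfalso
        rcases Sym2.eq_iff.mp h with ⟨h1, _⟩ | ⟨h1, _⟩
        · exact hrw h1
        · exact hsr h1.symm
      · rcases Sym2.eq_iff.mp h with ⟨h1, _⟩ | ⟨_, h2⟩
        · exact absurd h1 hru
        · exact Or.inl h2
    · intro hx
      rcases hx with rfl | ⟨ha, hxw⟩
      · exact Or.inr (Or.inr (Sym2.eq_swap))
      · refine Or.inl ⟨ha, fun h => ?_, fun h => ?_⟩
        · rcases Sym2.eq_iff.mp h with ⟨h1, _⟩ | ⟨h1, _⟩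
          · exact hru h1
          · exact hsr h1.symm
        · rcases Sym2.eq_iff.mp h with ⟨h1, _⟩ | ⟨_, h2⟩
          · exact hrw h1
          · exact hxw (by rw [h2]; rfl)
  have hNo : ∀ x, x ≠ u → x ≠ w → x ≠ s → x ≠ r → T'.neighborSet x = T.neighborSet x := by
    intro x hxu hxw hxs hxr
    ext z
    rw [SimpleGraph.mem_neighborSet, hT'adj]
    constructor
    · intro hz
      rcases hz with ⟨ha, _, _⟩ | h | h
      · exact ha
      · exfalso
        rcases Sym2.eq_iff.mp h with ⟨h1, _⟩ | ⟨h1, _⟩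
        · exact hxw h1
        · exact hxs h1
      · exfalso
        rcases Sym2.eq_iff.mp h with ⟨h1, _⟩ | ⟨h1, _⟩
        · exact hxu h1
        · exact hxr h1
    · intro hz
      refine Or.inl ⟨hz, fun h => ?_, fun h => ?_⟩
      · rcases Sym2.eq_iff.mp h with ⟨h1, _⟩ | ⟨h1, _⟩
        · exact hxu h1
        · exact hxs h1
      · rcases Sym2.eq_iff.mp h with ⟨h1, _⟩ | ⟨h1, _⟩
        · exact hxw h1
        · exact hxr h1
  have hdeg_all : ∀ x, deg T' x = deg T x := by
    intro x
    by_cases hxu : x = u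
    · subst hxu
      rw [deg_eq_ncard, deg_eq_ncard, hNu, Set.ncard_insert_of_notMem (fun h => hur h.1)]
      exact Set.ncard_diff_singleton_add_one hus_adj (Set.toFinite _)
    by_cases hxw : x = w
    · subst hxw
      rw [deg_eq_ncard, deg_eq_ncard, hNw, Set.ncard_insert_of_notMem (fun h => hws_adj h.1)]
      exact Set.ncard_diff_singleton_add_one hwr (Set.toFinite _)
    by_cases hxs : x = s
    · subst hxs
      rw [deg_eq_ncard, deg_eq_ncard, hNs2, hNs, Set.ncard_singleton, Set.ncard_singleton]
    by_cases hxr : x = r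
    · subst hxr
      rw [deg_eq_ncard, deg_eq_ncard, hNr, Set.ncard_insert_of_notMem (fun h => hur h.1.symm)]
      exact Set.ncard_diff_singleton_add_one hwr.symm (Set.toFinite _)
    rw [deg_eq_ncard, deg_eq_ncard, hNo x hxu hxw hxs hxr]
  -- Sombor index comparison
  have hdegs1 : deg T s = 1 := by rw [deg_eq_ncard, hNs, Set.ncard_singleton]
  have hdegr1 : 1 ≤ deg T r := deg_pos_of_adj hwr
  have husE : s(u,s) ∈ T.edgeSet := hus_adj
  have hwrE : s(w,r) ∈ T.edgeSet := hwr
  have hne1 : s(u,s) ≠ s(w,r) := by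
    rw [Ne, Sym2.eq_iff]
    rintro (⟨h1, _⟩ | ⟨h1, _⟩)
    · exact huw h1
    · exact hru2 h1
  have hne2 : s(w,s) ≠ s(u,r) := by
    rw [Ne, Sym2.eq_iff]
    rintro (⟨h1, _⟩ | ⟨h1, _⟩)
    · exact hwu h1
    · exact hrw h1.symm
  have hE' : T'.edgeSet = (T.edgeSet \ {s(u,s), s(w,r)}) ∪ {s(w,s), s(u,r)} := by
    ext e
    induction e using Sym2.ind with
    | _ x y =>
      rw [SimpleGraph.mem_edgeSet, hT'adj]
      constructor
      · intro he
        rcases he with ⟨ha, h1, h2⟩ | h | h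
        · refine Or.inl ⟨ha, ?_⟩
          rintro (h | h)
          · exact h1 h
          · rw [Set.mem_singleton_iff] at h
            exact h2 h
        · exact Or.inr (Or.inl h)
        · exact Or.inr (Or.inr h)
      · rintro (⟨ha, hne⟩ | (he | he))
        · exact Or.inl ⟨ha, fun h => hne (Or.inl h), fun h => hne (Or.inr h)⟩
        · exact Or.inr (Or.inl he)
        · rw [Set.mem_singleton_iff] at he
          exact Or.inr (Or.inr he)
  have hso : somborIndex T' ≤ somborIndex T := by
    set F : Sym2 (Fin n) → ℝ := Sym2.lift ⟨fun a b =>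
        Real.sqrt ((deg T a : ℝ) ^ 2 + (deg T b : ℝ) ^ 2), fun a b => by simp [add_comm]⟩
      with hF
    have hsoT : somborIndex T = ∑ᶠ e ∈ T.edgeSet, F e := rfl
    have hsoT' : somborIndex T' = ∑ᶠ e ∈ T'.edgeSet, F e := by
      have hfe : (Sym2.lift ⟨fun a b =>
          Real.sqrt ((deg T' a : ℝ) ^ 2 + (deg T' b : ℝ) ^ 2), fun a b => by simp [add_comm]⟩ :
          Sym2 (Fin n) → ℝ) = F := by
        rw [hF]
        exact congrArg Sym2.lift (Subtype.ext (funext fun a => funext fun b => by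
          show Real.sqrt ((deg T' a : ℝ) ^ 2 + (deg T' b : ℝ) ^ 2)
            = Real.sqrt ((deg T a : ℝ) ^ 2 + (deg T b : ℝ) ^ 2)
          rw [hdeg_all a, hdeg_all b]))
      rw [somborIndex, hfe]
    have hpair_sub : {s(u,s), s(w,r)} ⊆ T.edgeSet := by
      rintro e (rfl | he)
      · exact husE
      · rw [Set.mem_singleton_iff] at he; rw [he]; exact hwrE
    have hdisj1 : Disjoint (T.edgeSet \ {s(u,s), s(w,r)}) ({s(u,s), s(w,r)} : Set (Sym2 (Fin n))) :=
      Set.disjoint_sdiff_left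
    have hdisj2 : Disjoint (T.edgeSet \ {s(u,s), s(w,r)}) ({s(w,s), s(u,r)} : Set (Sym2 (Fin n))) := by
      rw [Set.disjoint_left]
      rintro e he (rfl | he2)
      · exact hws_adj he.1
      · rw [Set.mem_singleton_iff] at he2; subst he2; exact hur he.1
    have hsplitT : T.edgeSet = (T.edgeSet \ {s(u,s), s(w,r)}) ∪ {s(u,s), s(w,r)} :=
      (Set.diff_union_of_subset hpair_sub).symm
    have hfin0 : (T.edgeSet \ {s(u,s), s(w,r)}).Finite := Set.toFinite _
    rw [hsoT, hsoT', hE']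
    rw [finsum_mem_union hdisj2 hfin0 (Set.toFinite _), finsum_mem_pair hne2]
    conv_rhs => rw [hsplitT, finsum_mem_union hdisj1 hfin0 (Set.toFinite _),
      finsum_mem_pair hne1]
    refine add_le_add le_rfl ?_
    have hFus : F s(u,s) = Real.sqrt ((deg T u : ℝ) ^ 2 + 1) := by
      rw [hF, Sym2.lift_mk]
      show Real.sqrt ((deg T u : ℝ) ^ 2 + (deg T s : ℝ) ^ 2) = _
      rw [hdegs1]; norm_num
    have hFws : F s(w,s) = Real.sqrt ((deg T w : ℝ) ^ 2 + 1) := by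
      rw [hF, Sym2.lift_mk]
      show Real.sqrt ((deg T w : ℝ) ^ 2 + (deg T s : ℝ) ^ 2) = _
      rw [hdegs1]; norm_num
    have hFur : F s(u,r) = Real.sqrt ((deg T u : ℝ) ^ 2 + (deg T r : ℝ) ^ 2) := by
      rw [hF, Sym2.lift_mk]
    have hFwr : F s(w,r) = Real.sqrt ((deg T w : ℝ) ^ 2 + (deg T r : ℝ) ^ 2) := by
      rw [hF, Sym2.lift_mk]
    rw [hFus, hFws, hFur, hFwr]
    have hBA : ((deg T w : ℝ)) ^ 2 ≤ ((deg T u : ℝ)) ^ 2 := by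
      have h1 : (deg T w : ℝ) ≤ (deg T u : ℝ) := Nat.cast_le.mpr hdeg
      nlinarith [Nat.cast_nonneg (α := ℝ) (deg T w)]
    have ht : (1 : ℝ) ≤ ((deg T r : ℝ)) ^ 2 := by
      have h1 : (1 : ℝ) ≤ (deg T r : ℝ) := by exact_mod_cast hdegr1
      nlinarith
    have hB : (0 : ℝ) ≤ ((deg T w : ℝ)) ^ 2 := by positivity
    exact real_key hB hBA ht
  -- the path transfers to T'
  have hp₀edges : ∀ e ∈ p₀.edges, e ∈ T'.edgeSet := by
    intro e he
    have heT : e ∈ T.edgeSet := p₀.edges_subset_edgeSet he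
    have hes : e ≠ s(u,s) := by
      rintro rfl
      exact hsp (SimpleGraph.Walk.snd_mem_support_of_mem_edges _ he)
    have hew : e ≠ s(w,r) := by
      rintro rfl
      exact hrp (SimpleGraph.Walk.snd_mem_support_of_mem_edges _ he)
    rw [hE']
    refine Or.inl ⟨heT, ?_⟩
    rintro (h | h)
    · exact hes h
    · rw [Set.mem_singleton_iff] at h
      exact hew h
  have hadj_ws : T'.Adj w s := (hT'adj w s).mpr (Or.inr (Or.inl rfl))
  have hadj_ur : T'.Adj u r := (hT'adj u r).mpr (Or.inr (Or.inr rfl))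
  have hp₁path : (p₀.transfer T' hp₀edges).IsPath := hp₀.transfer _
  have hp₁supp : (p₀.transfer T' hp₀edges).support = p₀.support :=
    SimpleGraph.Walk.support_transfer _ _
  have hreach_uw : T'.Reachable u w := ⟨p₀.transfer T' hp₀edges⟩
  have hconn : T'.Connected := by
    refine conn_of_adj_reachable hT.isConnected ?_
    intro a b hab
    by_cases h1 : s(a,b) = s(u,s)
    · rcases Sym2.eq_iff.mp h1 with ⟨rfl, rfl⟩ | ⟨rfl, rfl⟩
      · exact hreach_uw.trans hadj_ws.reachable
      · exact (hreach_uw.trans hadj_ws.reachable).symm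
    by_cases h2 : s(a,b) = s(w,r)
    · rcases Sym2.eq_iff.mp h2 with ⟨rfl, rfl⟩ | ⟨rfl, rfl⟩
      · exact hreach_uw.symm.trans hadj_ur.reachable
      · exact (hreach_uw.symm.trans hadj_ur.reachable).symm
    · exact ((hT'adj a b).mpr (Or.inl ⟨hab, h1, h2⟩)).reachable
  have hbridge_ws : T'.IsBridge s(w,s) := by
    rw [SimpleGraph.isBridge_iff]
    rintro ⟨W⟩
    have hnil : ¬ W.reverse.Nil := SimpleGraph.Walk.not_nil_of_ne hsw
    obtain ⟨z, hz, q, _⟩ := SimpleGraph.Walk.not_nil_iff.mp hnil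
    rw [SimpleGraph.deleteEdges_adj] at hz
    have hzmem : z ∈ T'.neighborSet s := hz.1
    rw [hNs2, Set.mem_singleton_iff] at hzmem
    subst hzmem
    refine hz.2 ?_
    exact Sym2.eq_swap
  have hbridge_ur : T'.IsBridge s(u,r) := by
    rw [SimpleGraph.isBridge_iff]
    rintro ⟨W⟩
    have hW2path : W.bypass.IsPath := W.bypass_isPath
    have hsupp : s ∉ W.bypass.support := by
      refine pendant_not_mem_support (z := w) ?_ W.bypass hW2path hsu hsr
      intro x hx
      have hx' : T'.Adj s x := ((SimpleGraph.sdiff_adj _ _ _ _).mp hx).1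
      have : x ∈ T'.neighborSet s := hx'
      rwa [hNs2] at this
    have hedges : ∀ e ∈ W.bypass.edges, e ∈ T.edgeSet ∧ e ≠ s(w,r) := by
      intro e he
      have heG : e ∈ (T' \ SimpleGraph.fromEdgeSet {s(u,r)}).edgeSet :=
        W.bypass.edges_subset_edgeSet he
      induction e using Sym2.ind with
      | _ x y =>
        rw [SimpleGraph.mem_edgeSet, SimpleGraph.sdiff_adj] at heG
        obtain ⟨hxy, hnot⟩ := heG
        have hne_xy : x ≠ y := hxy.ne
        rcases (hT'adj x y).mp hxy with ⟨haT, _, h2⟩ | h | h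
        · exact ⟨haT, h2⟩
        · exfalso
          rcases Sym2.eq_iff.mp h with ⟨_, h2'⟩ | ⟨h1', _⟩
          · exact hsupp (h2' ▸ SimpleGraph.Walk.snd_mem_support_of_mem_edges _ he)
          · exact hsupp (h1' ▸ SimpleGraph.Walk.fst_mem_support_of_mem_edges _ he)
        · exact absurd (by rw [SimpleGraph.fromEdgeSet_adj]; exact ⟨h, hne_xy⟩) hnot
    have hT_edges : ∀ e ∈ W.bypass.edges, e ∈ T.edgeSet := fun e he => (hedges e he).1
    have hP₁path : (W.bypass.transfer T hT_edges).IsPath := hW2path.transfer _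
    have hP₁edges : s(w,r) ∉ (W.bypass.transfer T hT_edges).edges := by
      rw [SimpleGraph.Walk.edges_transfer]
      intro h
      exact (hedges _ h).2 rfl
    have hP₂path : (p₀.concat hwr).IsPath := by
      rw [SimpleGraph.Walk.isPath_def, SimpleGraph.Walk.support_concat,
        List.nodup_append']
      refine ⟨hp₀.support_nodup, List.nodup_singleton _, ?_⟩
      intro z hz hz'
      simp only [List.mem_singleton] at hz'
      subst hz'
      exact hrp hz
    have heq := (hT.existsUnique_path u r).unique hP₁path hP₂path
    apply hP₁edges
    rw [heq, SimpleGraph.Walk.edges_concat]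
    simp
  have hacyc : T'.IsAcyclic := by
    intro v c hc
    have h1 : s(w,s) ∉ c.edges :=
      (SimpleGraph.isBridge_iff_adj_and_forall_cycle_notMem hadj_ws).mp hbridge_ws c hc
    have h2 : s(u,r) ∉ c.edges :=
      (SimpleGraph.isBridge_iff_adj_and_forall_cycle_notMem hadj_ur).mp hbridge_ur c hc
    have hce : ∀ e ∈ c.edges, e ∈ T.edgeSet := by
      intro e he
      have heT' : e ∈ T'.edgeSet := c.edges_subset_edgeSet he
      induction e using Sym2.ind with
      | _ x y =>
        rw [SimpleGraph.mem_edgeSet] at heT' ⊢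
        rcases (hT'adj x y).mp heT' with ⟨haT, _, _⟩ | h | h
        · exact haT
        · exact absurd (h ▸ he) h1
        · exact absurd (h ▸ he) h2
    have hcT : (c.transfer T hce).IsCycle := by
      rw [SimpleGraph.Walk.isCycle_def] at hc ⊢
      refine ⟨?_, ?_, ?_⟩
      · rw [SimpleGraph.Walk.isTrail_def, SimpleGraph.Walk.edges_transfer]
        exact hc.1.edges_nodup
      · cases c with
        | nil => exact absurd rfl hc.2.1
        | cons h q => intro hh; cases hh
      · rw [SimpleGraph.Walk.support_transfer]
        exact hc.2.2
    exact hT.IsAcyclic _ hcT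
  exact ⟨T', ⟨hconn, hacyc⟩, hdeg_all, hso, hNu, hNw, hNs2, hNo,
    ⟨p₀.transfer T' hp₀edges, hp₁path, hp₁supp⟩⟩

-- iterated surgery
lemma surg {n : ℕ} : ∀ (N : ℕ) (T : SimpleGraph (Fin n)) (S R : Finset (Fin n)) (u w : Fin n),
    T.IsTree → S.card = N → R.card = N → u ≠ w →
    (∀ s ∈ S, T.neighborSet s = {u}) →
    (∀ r ∈ R, T.Adj w r) →
    (∀ r ∈ R, ¬ T.Adj u r) →
    (deg T w ≤ deg T u) →
    (∃ p : T.Walk u w, p.IsPath ∧ ∀ x ∈ p.support, x ∉ S ∧ x ∉ R) →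
    ∃ T' : SimpleGraph (Fin n), T'.IsTree ∧ (∀ x, deg T' x = deg T x) ∧
      somborIndex T' ≤ somborIndex T ∧
      T'.neighborSet w = (T.neighborSet w \ ↑R) ∪ ↑S := by
  intro N
  induction N with
  | zero =>
    intro T S R u w hT hScard hRcard _ _ _ _ _ _
    have hS0 : S = ∅ := Finset.card_eq_zero.mp hScard
    have hR0 : R = ∅ := Finset.card_eq_zero.mp hRcard
    subst hS0; subst hR0
    exact ⟨T, hT, fun _ => rfl, le_refl _, by simp⟩
  | succ N ih =>
    intro T S R u w hT hScard hRcard huw hS hR hur hdeg hpath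
    obtain ⟨p, hp, hdisj⟩ := hpath
    obtain ⟨s, hsS⟩ := Finset.card_pos.mp (by omega : 0 < S.card)
    obtain ⟨r, hrR⟩ := Finset.card_pos.mp (by omega : 0 < R.card)
    have hsp : s ∉ p.support := fun h => (hdisj s h).1 hsS
    have hrp : r ∉ p.support := fun h => (hdisj r h).2 hrR
    obtain ⟨T₁, hT₁, hdeg₁, hso₁, hNu₁, hNw₁, hNs₁, hNo₁, p₁, hp₁, hsupp₁⟩ :=
      double_move hT huw (hS s hsS) (hR r hrR) (hur r hrR) p hp hsp hrp hdeg
    have hSu : ∀ x ∈ S, x ≠ u := fun x hx h => (hdisj u p.start_mem_support).1 (h ▸ hx)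
    have hSw : ∀ x ∈ S, x ≠ w := fun x hx h => (hdisj w p.end_mem_support).1 (h ▸ hx)
    have hRu : ∀ x ∈ R, x ≠ u := fun x hx h => (hdisj u p.start_mem_support).2 (h ▸ hx)
    have hRw : ∀ x ∈ R, x ≠ w := fun x hx h => (hdisj w p.end_mem_support).2 (h ▸ hx)
    have hSR : ∀ x ∈ S, x ∉ R := by
      intro x hx hxR
      have h2 : w ∈ T.neighborSet x := (hR x hxR).symm
      rw [hS x hx, Set.mem_singleton_iff] at h2
      exact huw h2.symm
    have hRS : ∀ x ∈ R, x ∉ S := fun x hx hxS => hSR x hxS hx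
    obtain ⟨T₂, hT₂, hdeg₂, hso₂, hNw₂⟩ :=
      ih T₁ (S.erase s) (R.erase r) u w hT₁
        (by rw [Finset.card_erase_of_mem hsS, hScard]; rfl)
        (by rw [Finset.card_erase_of_mem hrR, hRcard]; rfl)
        huw
        (by
          intro s' hs'
          have hmem := Finset.mem_of_mem_erase hs'
          have hne := Finset.ne_of_mem_erase hs'
          rw [hNo₁ s' (hSu s' hmem) (hSw s' hmem) hne
            (fun h => hSR s' hmem (h ▸ hrR))]
          exact hS s' hmem)
        (by
          intro r' hr'
          have hmem := Finset.mem_of_mem_erase hr'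
          have hne := Finset.ne_of_mem_erase hr'
          have : r' ∈ T₁.neighborSet w := by
            rw [hNw₁]
            exact Or.inr ⟨hR r' hmem, by simp [hne]⟩
          exact this)
        (by
          intro r' hr' hadj
          have hmem := Finset.mem_of_mem_erase hr'
          have hne := Finset.ne_of_mem_erase hr'
          have hm : r' ∈ T₁.neighborSet u := hadj
          rw [hNu₁] at hm
          rcases hm with rfl | ⟨hm', _⟩
          · exact hne rfl
          · exact hur r' hmem hm')
        (by rw [hdeg₁, hdeg₁]; exact hdeg)
        ⟨p₁, hp₁, by
          rw [hsupp₁]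
          intro x hx
          exact ⟨fun h => (hdisj x hx).1 (Finset.mem_of_mem_erase h),
            fun h => (hdisj x hx).2 (Finset.mem_of_mem_erase h)⟩⟩
    refine ⟨T₂, hT₂, fun x => (hdeg₂ x).trans (hdeg₁ x), hso₂.trans hso₁, ?_⟩
    rw [hNw₂, hNw₁, Finset.coe_erase, Finset.coe_erase]
    ext x
    simp only [Set.mem_union, Set.mem_diff, Set.mem_insert_iff, Set.mem_singleton_iff,
      Finset.mem_coe]
    constructor
    · rintro (⟨(rfl | ⟨hN, hxr⟩), hnotR'⟩ | ⟨hxS, _⟩)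
      · exact Or.inr hsS
      · refine Or.inl ⟨hN, fun hxR => hnotR' ⟨hxR, hxr⟩⟩
      · exact Or.inr hxS
    · rintro (⟨hN, hnotR⟩ | hxS)
      · have hxr : x ≠ r := fun h => hnotR (h ▸ hrR)
        exact Or.inl ⟨Or.inr ⟨hN, hxr⟩, fun h => hnotR h.1⟩
      · by_cases hxs : x = s
        · subst hxs
          exact Or.inl ⟨Or.inl rfl, fun h => hSR x hsS h.1⟩
        · exact Or.inr ⟨hxS, hxs⟩

lemma sorted_getLast_le : ∀ (D : List ℕ) (hne : D ≠ []), D.Pairwise (· ≥ ·) →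
    ∀ x ∈ D, D.getLast hne ≤ x := by
  intro D
  induction D with
  | nil => intro h; exact absurd rfl h
  | cons a t ih =>
    intro hne hsort x hx
    cases t with
    | nil =>
      simp only [List.mem_singleton] at hx
      subst hx
      simp [List.getLast]
    | cons b t2 =>
      have hs2 : (b :: t2).Pairwise (· ≥ ·) := (List.pairwise_cons.mp hsort).2
      have hgl : (a :: b :: t2).getLast hne = (b :: t2).getLast (by simp) :=
        List.getLast_cons (by simp)
      rcases List.mem_cons.mp hx with rfl | hx2
      · have h1 := ih (by simp) hs2 b (by simp)
        have h2 : x ≥ b := (List.pairwise_cons.mp hsort).1 b (by simp)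
        rw [hgl]
        omega
      · rw [hgl]
        exact ih (by simp) hs2 x hx2

/-- For any tree-realizable degree sequence `D = (d₁ ≥ … ≥ d_k ≥ 2)`, some tree minimizing
the Sombor index among trees with degree sequence `D` has a non-pendant vertex of degree `d_k`
all of whose neighbors, except at most one, are pendant. -/
theorem exists_minimizer_with_pendant_children (D : List ℕ) (hne : D ≠ [])
    (hsort : D.Pairwise (· ≥ ·)) (hD : ∀ d ∈ D, 2 ≤ d)
    (hreal : ∃ (n : ℕ) (T : SimpleGraph (Fin n)), T.IsTree ∧ degSeq T = ↑D) :
    ∃ (n : ℕ) (T : SimpleGraph (Fin n)), T.IsTree ∧ degSeq T = ↑D ∧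
      (∀ (m : ℕ) (T' : SimpleGraph (Fin m)), T'.IsTree → degSeq T' = ↑D →
        somborIndex T ≤ somborIndex T') ∧
      ∃ v : Fin n, deg T v = D.getLast hne ∧ deg T v ≠ 1 ∧
        ∀ w₁ w₂ : Fin n, T.Adj v w₁ → T.Adj v w₂ →
          deg T w₁ ≠ 1 → deg T w₂ ≠ 1 → w₁ = w₂ := by
  classical
  obtain ⟨n, T₀, hT₀, hdeg₀⟩ := hreal
  obtain ⟨T, hT_mem, hT_min⟩ := Finset.exists_min_image
    ((Finset.univ : Finset (SimpleGraph (Fin n))).filter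
      (fun G => G.IsTree ∧ degSeq G = ↑D)) somborIndex
    ⟨T₀, by simp only [Finset.mem_filter, Finset.mem_univ, true_and]; exact ⟨hT₀, hdeg₀⟩⟩
  simp only [Finset.mem_filter, Finset.mem_univ, true_and] at hT_mem
  obtain ⟨hTtree, hTdeg⟩ := hT_mem
  have hmin : ∀ (m : ℕ) (T' : SimpleGraph (Fin m)), T'.IsTree → degSeq T' = ↑D →
      somborIndex T ≤ somborIndex T' := by
    intro m T' h1 h2
    have e1 := size_eq T' h1 h2
    have e2 := size_eq T₀ hT₀ hdeg₀
    have hmn : m = n := by omega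
    subst hmn
    exact hT_min T' (by
      simp only [Finset.mem_filter, Finset.mem_univ, true_and]; exact ⟨h1, h2⟩)
  set d := D.getLast hne with hd
  have hdD : d ∈ D := List.getLast_mem hne
  have hd2 : 2 ≤ d := hD d hdD
  have hmemdeg : ∀ x : Fin n, deg T x ≠ 1 → deg T x ∈ D := by
    intro x hx
    have hmem : deg T x ∈ degSeq T := by
      refine Multiset.mem_map_of_mem _ ?_
      rw [Finset.mem_val, Finset.mem_filter]
      exact ⟨Finset.mem_univ x, hx⟩
    rw [hTdeg] at hmem
    exact Multiset.mem_coe.mp hmem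
  have hne_np : ∃ x : Fin n, deg T x ≠ 1 := by
    by_contra h
    push_neg at h
    have h0 : degSeq T = 0 := by
      rw [degSeq]
      have he : Finset.univ.filter (fun v : Fin n => deg T v ≠ 1) = ∅ :=
        Finset.filter_eq_empty_iff.mpr (fun x _ => not_not_intro (h x))
      rw [he]
      simp
    rw [hTdeg] at h0
    exact hne ((Multiset.coe_eq_zero D).mp h0)
  obtain ⟨x₀, hx₀⟩ := hne_np
  obtain ⟨u, hu_np, hu_periph⟩ := exists_peripheral hTtree hx₀
  have hu_mem : deg T u ∈ D := hmemdeg u hu_np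
  have hu2 : 2 ≤ deg T u := hD _ hu_mem
  have hud : d ≤ deg T u := sorted_getLast_le D hne hsort _ hu_mem
  by_cases hcase : deg T u = d
  · exact ⟨n, T, hTtree, hTdeg, hmin, u, hcase, hu_np, hu_periph⟩
  have hud' : d < deg T u := lt_of_le_of_ne hud (Ne.symm hcase)
  -- find a vertex w of degree d
  have hd_seq : (d : ℕ) ∈ degSeq T := by
    rw [hTdeg]
    exact Multiset.mem_coe.mpr hdD
  obtain ⟨w, hw_val, hw_deg⟩ := Multiset.mem_map.mp hd_seq
  rw [Finset.mem_val, Finset.mem_filter] at hw_val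
  have hw_np : deg T w ≠ 1 := hw_val.2
  have huw : u ≠ w := fun h => hcase (by rw [h, hw_deg])
  -- the unique path from u to w and its last edge
  obtain ⟨p₀, hp₀⟩ := (hTtree.existsUnique_path u w)
  obtain ⟨y, Q, hyadj, hdecomp, hQpath, hwQ, hyedge, hlast⟩ := lastEdge p₀ hp₀.1 huw
  have hwy_adj : T.Adj w y := hyadj.symm
  -- counting neighbours
  have hfilter_card : ∀ v : Fin n, (Finset.univ.filter (fun x => T.Adj v x)).card = deg T v := by
    intro v
    rw [deg_eq_degree]
    congr 1
    ext x
    simp [SimpleGraph.mem_neighborFinset]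
  set Rf := (Finset.univ.filter (fun x => T.Adj w x)).erase y with hRf
  have hy_mem : y ∈ Finset.univ.filter (fun x => T.Adj w x) := by
    rw [Finset.mem_filter]
    exact ⟨Finset.mem_univ y, hwy_adj⟩
  have hRcard : Rf.card = d - 1 := by
    rw [hRf, Finset.card_erase_of_mem hy_mem, hfilter_card, hw_deg]
  set Nu := Finset.univ.filter (fun x => T.Adj u x) with hNu
  set Pf := Nu.filter (fun x => deg T x = 1) with hPf
  have hNP1 : (Nu.filter (fun x => ¬ deg T x = 1)).card ≤ 1 := by
    rw [Finset.card_le_one]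
    intro a ha b hb
    rw [Finset.mem_filter, hNu, Finset.mem_filter] at ha hb
    exact hu_periph a b ha.1.2 hb.1.2 ha.2 hb.2
  have hPNP : Pf.card + (Nu.filter (fun x => ¬ deg T x = 1)).card = deg T u := by
    rw [hPf, Finset.card_filter_add_card_filter_not, hNu, hfilter_card]
  have hPcard : d - 1 ≤ Pf.card := by omega
  obtain ⟨Sf, hSsub, hScard⟩ := Finset.exists_subset_card_eq hPcard
  have hS_facts : ∀ s ∈ Sf, T.Adj u s ∧ deg T s = 1 := by
    intro s hs
    have := hSsub hs
    rw [hPf, Finset.mem_filter, hNu, Finset.mem_filter] at this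
    exact ⟨this.1.2, this.2⟩
  have hSpend : ∀ s ∈ Sf, T.neighborSet s = {u} := fun s hs =>
    neighborSet_eq_singleton (hS_facts s hs).1 (hS_facts s hs).2
  have hRadj : ∀ r ∈ Rf, T.Adj w r := by
    intro r hr
    have := Finset.mem_of_mem_erase hr
    rw [Finset.mem_filter] at this
    exact this.2
  have hwr_edge_not : ∀ r ∈ Rf, s(r, w) ∉ p₀.edges := by
    intro r hr hmem
    exact Finset.ne_of_mem_erase hr (hlast r (hRadj r hr).ne' hmem)
  have hur_not : ∀ r ∈ Rf, ¬ T.Adj u r := by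
    intro r hr hadj
    have hru : r ≠ u := fun h => T.loopless.irrefl u (h ▸ hadj)
    have hrwadj : T.Adj w r := hRadj r hr
    have hrw : r ≠ w := hrwadj.ne'
    have hP : (SimpleGraph.Walk.cons hadj
        (SimpleGraph.Walk.cons hrwadj.symm SimpleGraph.Walk.nil)).IsPath := by
      rw [SimpleGraph.Walk.isPath_def]
      simp [huw, hru.symm, hrw]
    have heq := hp₀.2 _ hP
    apply hwr_edge_not r hr
    rw [← heq]
    simp
  have hrsupp : ∀ r ∈ Rf, r ∉ p₀.support := by
    intro r hr hmem
    have hrwadj : T.Adj w r := hRadj r hr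
    have hrw : r ≠ w := hrwadj.ne'
    have hQ1 : (p₀.takeUntil r hmem).IsPath := hp₀.1.takeUntil hmem
    have hw_not : w ∉ (p₀.takeUntil r hmem).support :=
      end_not_mem_takeUntil p₀ hp₀.1 hmem hrw
    have hP2 : ((p₀.takeUntil r hmem).concat hrwadj.symm).IsPath := by
      rw [SimpleGraph.Walk.isPath_def, SimpleGraph.Walk.support_concat,
        List.nodup_append']
      refine ⟨hQ1.support_nodup, List.nodup_singleton _, ?_⟩
      intro z hz hz'
      simp only [List.mem_singleton] at hz'
      subst hz'
      exact hw_not hz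
    have heq := hp₀.2 _ hP2
    apply hwr_edge_not r hr
    rw [← heq, SimpleGraph.Walk.edges_concat]
    simp
  have hssupp : ∀ s ∈ Sf, s ∉ p₀.support := by
    intro s hs
    refine pendant_not_mem_support (z := u) (by rw [hSpend s hs]) p₀ hp₀.1 ?_ ?_
    · intro h
      have := (hS_facts s hs).2
      rw [h] at this
      omega
    · intro h
      have := (hS_facts s hs).2
      rw [h, hw_deg] at this
      omega
  obtain ⟨T', hT'tree, hT'deg, hT'so, hT'Nw⟩ :=
    surg (d-1) T Sf Rf u w hTtree hScard hRcard huw hSpend hRadj hur_not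
      (by rw [hw_deg]; exact hud)
      ⟨p₀, hp₀.1, fun x hx => ⟨fun hxS => hssupp x hxS hx, fun hxR => hrsupp x hxR hx⟩⟩
  have hdegfun : deg T' = deg T := funext hT'deg
  have hdegseq' : degSeq T' = ↑D := by
    have : degSeq T' = degSeq T := by rw [degSeq, degSeq, hdegfun]
    rw [this, hTdeg]
  refine ⟨n, T', hT'tree, hdegseq',
    fun m T'' h1 h2 => le_trans (le_trans hT'so (le_refl _)) (hmin m T'' h1 h2),
    w, ?_, ?_, ?_⟩
  · rw [hT'deg w, hw_deg]
  · rw [hT'deg w, hw_deg]; omega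
  · intro w₁ w₂ h1 h2 hnp1 hnp2
    have key : ∀ z : Fin n, T'.Adj w z → deg T' z ≠ 1 → z = y := by
      intro z hz hnp
      have hm : z ∈ T'.neighborSet w := hz
      rw [hT'Nw] at hm
      rcases hm with ⟨hmN, hmR⟩ | hmS
      · by_contra hzy
        refine hmR ?_
        rw [hRf, Finset.mem_coe, Finset.mem_erase]
        exact ⟨hzy, by rw [Finset.mem_filter]; exact ⟨Finset.mem_univ z, hmN⟩⟩
      · exfalso
        rw [Finset.mem_coe] at hmS
        exact hnp (by rw [hT'deg z]; exact (hS_facts z hmS).2)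
    rw [key w₁ h1 hnp1, key w₂ h2 hnp2]
end
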